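/- Let r ∈ (0,1), λ > 0. Then R := (r/(1-r))·e^λ > 1 if and only if log((1-r)/r) < λ, and in that case the function z ↦ 1 + (r/(1-r))·e^z (holomorphic on ℂ) has a zero z₀ = log((1-r)/r) + iπ with Re(z₀) < λ; consequently, for non-integer x > 0, there is no holomorphic function g on the strip {Re(z) < λ} with g(θ) = (1-r+r·e^θ)^x for all real θ < λ. -/

import Mathlib

open Complex Real Filter Topology

theorem branch_point_obstruction (r l x : ℝ) (hr : r ∈ Set.Ioo (0:ℝ) 1) (hl : 0 < l)
    (hx : 0 < x) (hxnotint : ∀ n : ℤ, x ≠ n) :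
    (1 < r / (1 - r) * Real.exp l ↔ Real.log ((1 - r) / r) < l) ∧
    (1 < r / (1 - r) * Real.exp l →
      (((Real.log ((1 - r) / r) : ℂ) + Real.pi * Complex.I).re < l ∧
        1 + (r / (1 - r) : ℂ) *
          Complex.exp ((Real.log ((1 - r) / r) : ℂ) + Real.pi * Complex.I) = 0) ∧
      ¬ ∃ g : ℂ → ℂ, DifferentiableOn ℂ g {z : ℂ | z.re < l} ∧
        ∀ θ : ℝ, θ < l → g θ = ((1 - r + r * Real.exp θ) ^ x : ℝ)) := by
  obtain ⟨hr0, hr1⟩ := hr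
  have h1r : (0:ℝ) < 1 - r := by linarith
  have hiff : 1 < r / (1 - r) * Real.exp l ↔ Real.log ((1 - r) / r) < l := by
    rw [Real.log_lt_iff_lt_exp (by positivity), div_lt_iff₀ hr0, div_mul_eq_mul_div,
      lt_div_iff₀ h1r, one_mul]
    constructor <;> intro h <;> nlinarith
  refine ⟨hiff, fun hR => ?_⟩
  have hlog := hiff.mp hR
  set z₀ : ℂ := (Real.log ((1 - r) / r) : ℂ) + Real.pi * Complex.I with hz₀def
  have hre : z₀.re = Real.log ((1 - r) / r) := by simp [hz₀def]
  have hexpz₀ : Complex.exp z₀ = -(((1 - r) / r : ℝ) : ℂ) := by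
    rw [hz₀def, Complex.exp_add, Complex.exp_pi_mul_I, ← Complex.ofReal_exp,
      Real.exp_log (by positivity)]
    ring
  have hrC : (r:ℂ) ≠ 0 := Complex.ofReal_ne_zero.mpr hr0.ne'
  have h1rC : (1:ℂ) - r ≠ 0 := by
    have : ((1 - r : ℝ) : ℂ) ≠ 0 := Complex.ofReal_ne_zero.mpr h1r.ne'
    push_cast at this
    exact this
  have hzero : 1 + (r / (1 - r) : ℂ) * Complex.exp z₀ = 0 := by
    rw [hexpz₀]
    push_cast
    field_simp
    ring
  refine ⟨⟨by rw [hre]; exact hlog, hzero⟩, ?_⟩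
  rintro ⟨g, hgdiff, hgval⟩
  set S : Set ℂ := {z : ℂ | z.re < l} with hSdef
  have hSopen : IsOpen S := isOpen_lt Complex.continuous_re continuous_const
  have hSpre : IsPreconnected S := (convex_halfSpace_re_lt l).isPreconnected
  have hgA : AnalyticOnNhd ℂ g S := hgdiff.analyticOnNhd hSopen
  set h : ℂ → ℂ := fun z => 1 - (r:ℂ) + r * Complex.exp z with hhdef
  have hhderiv : ∀ z : ℂ, HasDerivAt h ((r:ℂ) * Complex.exp z) z := fun z => by
    exact ((Complex.hasDerivAt_exp z).const_mul (r:ℂ)).const_add (1 - (r:ℂ))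
  -- analyticity of the two sides
  have hdA : AnalyticOnNhd ℂ (deriv g) S := hgA.deriv
  have hexpA : ∀ z ∈ S, AnalyticAt ℂ (fun w => (x:ℂ) * ((r:ℂ) * Complex.exp w)) z :=
    fun z _ => analyticAt_const.mul (analyticAt_const.mul analyticAt_cexp)
  have hhA : ∀ z ∈ S, AnalyticAt ℂ h z :=
    fun z _ => analyticAt_const.add (analyticAt_const.mul analyticAt_cexp)
  have hG1A : AnalyticOnNhd ℂ (fun z => deriv g z * h z) S := hdA.mul hhA
  have hG2A : AnalyticOnNhd ℂ (fun z => (x:ℂ) * ((r:ℂ) * Complex.exp z) * g z) S :=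
    AnalyticOnNhd.mul hexpA hgA
  have hb : ∀ θ : ℝ, (0:ℝ) < 1 - r + r * Real.exp θ := fun θ => by positivity
  have hmem : ∀ θ : ℝ, θ < l → (θ:ℂ) ∈ S := fun θ hθ => by simpa [hSdef] using hθ
  -- derivative of g at real points
  have hderivg : ∀ θ : ℝ, θ < l →
      deriv g θ = ((r * Real.exp θ * x * (1 - r + r * Real.exp θ) ^ (x - 1) : ℝ) : ℂ) := by
    intro θ hθ
    have hgd : DifferentiableAt ℂ g θ := hgdiff.differentiableAt (hSopen.mem_nhds (hmem θ hθ))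
    have h1 : HasDerivAt (fun t : ℝ => g t) (deriv g θ) θ := hgd.hasDerivAt.comp_ofReal
    have hψ : HasDerivAt (fun t : ℝ => (1 - r + r * Real.exp t) ^ x)
        (r * Real.exp θ * x * (1 - r + r * Real.exp θ) ^ (x - 1)) θ :=
      (((Real.hasDerivAt_exp θ).const_mul r).const_add (1 - r)).rpow_const (Or.inl (hb θ).ne')
    have h2 : HasDerivAt (fun t : ℝ => (((1 - r + r * Real.exp t) ^ x : ℝ) : ℂ))
        ((r * Real.exp θ * x * (1 - r + r * Real.exp θ) ^ (x - 1) : ℝ)) θ := hψ.ofReal_comp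
    have heq : (fun t : ℝ => (((1 - r + r * Real.exp t) ^ x : ℝ) : ℂ)) =ᶠ[𝓝 θ]
        (fun t : ℝ => g t) := by
      filter_upwards [Iio_mem_nhds hθ] with t ht
      exact (hgval t ht).symm
    exact (h1.congr_of_eventuallyEq heq).unique h2
  -- equality of the two sides at real points below l
  have hkeyR : ∀ θ : ℝ, θ < l →
      deriv g θ * h θ = (x:ℂ) * ((r:ℂ) * Complex.exp θ) * g θ := by
    intro θ hθ
    have hbx : (1 - r + r * Real.exp θ) ^ (x - 1) * (1 - r + r * Real.exp θ)
        = (1 - r + r * Real.exp θ) ^ x := by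
      rw [← Real.rpow_add_one (hb θ).ne' (x - 1)]
      ring_nf
    have hh : h (θ:ℂ) = ((1 - r + r * Real.exp θ : ℝ) : ℂ) := by
      simp only [hhdef]
      rw [← Complex.ofReal_exp]
      push_cast
      ring
    rw [hderivg θ hθ, hgval θ hθ, hh, ← Complex.ofReal_exp, ← hbx]
    push_cast
    ring
  have h0S : (0:ℂ) ∈ S := by simpa [hSdef] using hl
  -- frequently equal near 0
  have hfreq : ∃ᶠ z in 𝓝[≠] (0:ℂ),
      deriv g z * h z = (x:ℂ) * ((r:ℂ) * Complex.exp z) * g z := by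
    have htR : Tendsto (fun k : ℕ => -(1 / ((k:ℝ) + 1))) atTop (𝓝 0) := by
      simpa using (tendsto_one_div_add_atTop_nhds_zero_nat (𝕜 := ℝ)).neg
    have htC : Tendsto (fun k : ℕ => ((-(1 / ((k:ℝ) + 1)) : ℝ) : ℂ)) atTop (𝓝 0) := by
      have h' := (Complex.continuous_ofReal.tendsto (0:ℝ)).comp htR
      rw [Complex.ofReal_zero] at h'
      exact h'
    have htend : Tendsto (fun k : ℕ => ((-(1 / ((k:ℝ) + 1)) : ℝ) : ℂ)) atTop (𝓝[≠] 0) := by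
      apply tendsto_nhdsWithin_of_tendsto_nhds_of_eventually_within _ htC
      filter_upwards with k
      have hk : -(1 / ((k:ℝ) + 1)) ≠ 0 := by
        have : (0:ℝ) < 1 / ((k:ℝ) + 1) := by positivity
        linarith
      simp only [Set.mem_compl_iff, Set.mem_singleton_iff]
      exact fun hc => hk (by exact_mod_cast hc)
    refine htend.frequently (Frequently.of_forall fun k => ?_)
    have hk : -(1 / ((k:ℝ) + 1)) < l := by
      have : (0:ℝ) < 1 / ((k:ℝ) + 1) := by positivity
      linarith
    exact hkeyR _ hk
  have hkey : Set.EqOn (fun z => deriv g z * h z)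
      (fun z => (x:ℂ) * ((r:ℂ) * Complex.exp z) * g z) S :=
    hG1A.eqOn_of_preconnected_of_frequently_eq hG2A hSpre h0S hfreq
  have hz₀S : z₀ ∈ S := by
    simp only [hSdef, Set.mem_setOf_eq, hre]
    exact hlog
  have hhz₀ : h z₀ = 0 := by
    rw [hhdef]
    simp only [hexpz₀]
    push_cast
    field_simp
    ring
  have hrez₀ : (r:ℂ) * Complex.exp z₀ ≠ 0 := mul_ne_zero hrC (Complex.exp_ne_zero _)
  have hxC : (x:ℂ) ≠ 0 := Complex.ofReal_ne_zero.mpr hx.ne'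
  have hgz₀ : g z₀ = 0 := by
    have hk := hkey hz₀S
    simp only [hhz₀, mul_zero] at hk
    have := mul_eq_zero.mp hk.symm
    rcases this with h' | h'
    · exact absurd h' (mul_ne_zero hxC hrez₀)
    · exact h'
  have hg0 : g 0 = 1 := by
    have h0 := hgval 0 hl
    rw [Real.exp_zero, mul_one, sub_add_cancel, Real.one_rpow] at h0
    simpa using h0
  have hgAz₀ : AnalyticAt ℂ g z₀ := hgA z₀ hz₀S
  have horder_ne_top : analyticOrderAt g z₀ ≠ ⊤ := by
    intro htop
    have hev := analyticOrderAt_eq_top.mp htop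
    have hEq : Set.EqOn g 0 S :=
      hgA.eqOn_zero_of_preconnected_of_eventuallyEq_zero hSpre hz₀S hev
    have := hEq h0S
    rw [hg0] at this
    exact one_ne_zero this
  obtain ⟨n, hn⟩ : ∃ n : ℕ, analyticOrderAt g z₀ = n :=
    ⟨(analyticOrderAt g z₀).toNat, (ENat.coe_toNat horder_ne_top).symm⟩
  obtain ⟨u, huA, hu0, huev⟩ := hgAz₀.analyticOrderAt_eq_natCast.mp hn
  have hn1 : n ≠ 0 := by
    intro h0
    have hself := huev.self_of_nhds
    rw [h0, pow_zero, one_smul, hgz₀] at hself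
    exact hu0 hself.symm
  obtain ⟨m, rfl⟩ : ∃ m, n = m + 1 :=
    ⟨n - 1, (Nat.succ_pred_eq_of_pos (Nat.pos_of_ne_zero hn1)).symm⟩
  set v : ℂ → ℂ := dslope h z₀ with hvdef
  have hvfac : ∀ z : ℂ, h z = (z - z₀) * v z := fun z => by
    have hs := sub_smul_dslope h z₀ z
    rw [smul_eq_mul, hhz₀, sub_zero] at hs
    exact hs.symm
  have hvz₀ : v z₀ = (r:ℂ) * Complex.exp z₀ := by
    rw [hvdef, dslope_same]
    exact (hhderiv z₀).deriv
  have hvcont : ContinuousAt v z₀ :=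
    continuousAt_dslope_same.mpr (hhderiv z₀).differentiableAt
  have hducont : ContinuousAt (deriv u) z₀ := by
    have hU' : AnalyticOnNhd ℂ u {y | AnalyticAt ℂ u y} := fun y hy => hy
    exact (hU'.deriv z₀ huA).continuousAt
  have hevd : ∀ᶠ z in 𝓝 z₀, deriv g z =
      ((m+1:ℕ):ℂ) * (z - z₀)^m * u z + (z - z₀)^(m+1) * deriv u z := by
    have h1 : deriv g =ᶠ[𝓝 z₀] deriv (fun z => (z - z₀)^(m+1) * u z) := by
      apply Filter.EventuallyEq.deriv
      filter_upwards [huev] with z hz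
      rw [hz, smul_eq_mul]
    filter_upwards [h1, huA.eventually_analyticAt] with z h1z hz
    rw [h1z]
    have hpow : HasDerivAt (fun w : ℂ => (w - z₀)^(m+1)) (((m+1:ℕ):ℂ) * (z - z₀)^m) z := by
      simpa using ((hasDerivAt_id z).sub_const z₀).fun_pow (m+1)
    exact (hpow.mul hz.differentiableAt.hasDerivAt).deriv
  set F : ℂ → ℂ := fun z => ((((m+1:ℕ)):ℂ) * u z + (z - z₀) * deriv u z) * v z
      - (x:ℂ) * ((r:ℂ) * Complex.exp z) * u z with hFdef
  have hFev : ∀ᶠ z in 𝓝[≠] z₀, F z = 0 := by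
    filter_upwards [hevd.filter_mono nhdsWithin_le_nhds, huev.filter_mono nhdsWithin_le_nhds,
      ((hSopen.eventually_mem hz₀S).filter_mono nhdsWithin_le_nhds), self_mem_nhdsWithin]
      with z hd hu hzS hzne
    have hzz : (z - z₀) ≠ 0 := sub_ne_zero.mpr hzne
    have hkz := hkey hzS
    simp only at hkz
    rw [hd, hu, smul_eq_mul, hvfac z] at hkz
    have hcancel : (z - z₀)^(m+1) * F z = 0 := by
      rw [hFdef]
      linear_combination hkz
    exact (mul_eq_zero.mp hcancel).resolve_left (pow_ne_zero _ hzz)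
  have hFcont : ContinuousAt F z₀ := by
    refine ContinuousAt.sub (ContinuousAt.mul ?_ hvcont) (ContinuousAt.mul ?_ huA.continuousAt)
    · exact ContinuousAt.add (continuousAt_const.mul huA.continuousAt)
        ((continuousAt_id.sub continuousAt_const).mul hducont)
    · exact continuousAt_const.mul (continuousAt_const.mul Complex.continuous_exp.continuousAt)
  have hFz₀ : F z₀ = 0 := by
    have h1 : Tendsto F (𝓝[≠] z₀) (𝓝 (F z₀)) := hFcont.continuousWithinAt.tendsto
    have h2 : Tendsto F (𝓝[≠] z₀) (𝓝 0) :=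
      tendsto_const_nhds.congr' (hFev.mono fun z hz => hz.symm)
    exact tendsto_nhds_unique h1 h2
  have hfinal : ((((m+1:ℕ)):ℂ) - x) * (((r:ℂ) * Complex.exp z₀) * u z₀) = 0 := by
    rw [hFdef] at hFz₀
    simp only [sub_self, zero_mul, add_zero, hvz₀] at hFz₀
    linear_combination hFz₀
  have hne : (((r:ℂ) * Complex.exp z₀) * u z₀) ≠ 0 := mul_ne_zero hrez₀ hu0
  have hxm : (x:ℂ) = ((m+1:ℕ):ℂ) := by
    have := (mul_eq_zero.mp hfinal).resolve_right hne
    linear_combination -this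
  have : x = ((m+1:ℕ):ℝ) := by exact_mod_cast hxm
  exact hxnotint (m+1 : ℤ) (by push_cast at this ⊢; linarith)
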